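/- For every positive integer π, there exist prime numbers p and n with n > 1 and p not dividing n such that the function φ defined by φ(e) := n·p^e − dim_{Z/pZ} ((Z/pZ)[X,Y]/(X^{p^e}, Y^{p^e}, X^n − Y^n)) for nonnegative integers e is periodic with minimal positive period exactly π. -/

import Mathlib

open MvPolynomial Finsupp

noncomputable section HKaux

namespace HKaux

variable (k : Type*) [Field k] (n q : ℕ)

/-- membership in the basis staircase region -/
def good (b : ℕ × ℕ) : Prop :=
  b.2 < q ∧ ¬(q % n ≤ b.1 ∧ q / n * n ≤ b.2)

instance : ∀ b, Decidable (good n q b) := fun b => by unfold good; infer_instance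

/-- reduction of an exponent pair -/
def redm (i j : ℕ) : ℕ × ℕ := (i % n, j + i / n * n)

/-- normal form of a monomial -/
def fn (i j : ℕ) : (ℕ × ℕ) →₀ k :=
  if good n q (redm n i j) then Finsupp.single (redm n i j) 1 else 0

/-- normal form linear map -/
def NF : MvPolynomial (Fin 2) k →ₗ[k] ((ℕ × ℕ) →₀ k) :=
  (basisMonomials (Fin 2) k).constr k (fun m => fn k n q (m 0) (m 1))

lemma fin2_decomp (m : Fin 2 →₀ ℕ) :
    m = Finsupp.single 0 (m 0) + Finsupp.single 1 (m 1) := by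
  ext i
  fin_cases i <;> simp [Finsupp.single_apply]

lemma mon_eq (i j : ℕ) : (X 0 : MvPolynomial (Fin 2) k) ^ i * X 1 ^ j
    = monomial (Finsupp.single 0 i + Finsupp.single 1 j) 1 := by
  rw [X_pow_eq_monomial, X_pow_eq_monomial, monomial_mul, one_mul]

lemma basis_eq (m : Fin 2 →₀ ℕ) :
    (basisMonomials (Fin 2) k) m = (X 0 : MvPolynomial (Fin 2) k) ^ (m 0) * X 1 ^ (m 1) := by
  rw [mon_eq]
  conv_lhs => rw [fin2_decomp m]
  simp [coe_basisMonomials]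

lemma NF_mon (i j : ℕ) :
    NF k n q ((X 0 : MvPolynomial (Fin 2) k) ^ i * X 1 ^ j) = fn k n q i j := by
  have h : (X 0 : MvPolynomial (Fin 2) k) ^ i * X 1 ^ j
      = (basisMonomials (Fin 2) k) (Finsupp.single 0 i + Finsupp.single 1 j) := by
    rw [basis_eq]
    simp [Finsupp.single_apply]
  rw [NF, h, Module.Basis.constr_basis]
  simp [Finsupp.single_apply]

variable {n q}

lemma fn_xq (hn : 1 < n) (i j : ℕ) : fn k n q (q + i) j = 0 := by
  unfold fn
  rw [if_neg]
  rintro ⟨h1, h2⟩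
  simp only [redm] at h1 h2
  have hdle : q / n ≤ (q + i) / n := Nat.div_le_div_right (Nat.le_add_right _ _)
  have hqm : q / n * n + q % n = q := Nat.div_add_mod' q n
  have hdm : (q + i) / n * n + (q + i) % n = q + i := Nat.div_add_mod' (q + i) n
  have hmlt : q % n < n := Nat.mod_lt _ (by omega)
  rcases Nat.lt_or_ge (q / n) ((q + i) / n) with hlt | hge
  · have h3 : (q / n + 1) * n ≤ (q + i) / n * n := Nat.mul_le_mul_right _ hlt
    have h4 : (q / n + 1) * n = q / n * n + n := by ring
    omega
  · have heq : (q + i) / n = q / n := le_antisymm hge hdle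
    rw [heq] at h1 hdm h2
    exact h2 ⟨by omega, by omega⟩

lemma fn_yq (i j : ℕ) : fn k n q i (j + q) = 0 := by
  unfold fn
  rw [if_neg]
  rintro ⟨h1, -⟩
  simp only [redm] at h1
  omega

lemma fn_shift (hn : 1 < n) (i j : ℕ) : fn k n q (n + i) j = fn k n q i (j + n) := by
  have hr : redm n (n + i) j = redm n i (j + n) := by
    have h1 : (n + i) % n = i % n := Nat.add_mod_left n i
    have h2 : (n + i) / n = i / n + 1 := by
      rw [Nat.add_comm n i, Nat.add_div_right _ (by omega)]
    simp only [redm, h1, h2]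
    have : j + (i / n + 1) * n = j + n + i / n * n := by ring
    rw [this]
  unfold fn
  rw [hr]

section Ideal

variable {k}

/-- the ideal -/
def Ik (k : Type*) [Field k] (n q : ℕ) : Ideal (MvPolynomial (Fin 2) k) :=
  Ideal.span {(X 0 : MvPolynomial (Fin 2) k) ^ q, X 1 ^ q, X 0 ^ n - X 1 ^ n}

lemma mem_pow_sub (c : ℕ) :
    (X 0 : MvPolynomial (Fin 2) k) ^ (c * n) - X 1 ^ (c * n) ∈ Ik k n q := by
  have hd : ((X 0 : MvPolynomial (Fin 2) k) ^ n - X 1 ^ n) ∣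
      (X 0 ^ n) ^ c - (X 1 ^ n) ^ c := sub_dvd_pow_sub_pow _ _ c
  obtain ⟨t, ht⟩ := hd
  have : (X 0 : MvPolynomial (Fin 2) k) ^ (c * n) - X 1 ^ (c * n)
      = (X 0 ^ n - X 1 ^ n) * t := by
    rw [mul_comm c n, pow_mul, pow_mul, ht]
  rw [this]
  exact Ideal.mul_mem_right _ _ (Ideal.subset_span (by simp))

lemma mem_reduce (i j : ℕ) :
    (X 0 : MvPolynomial (Fin 2) k) ^ i * X 1 ^ j
      - X 0 ^ (i % n) * X 1 ^ (j + i / n * n) ∈ Ik k n q := by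
  have hi : i = i / n * n + i % n := (Nat.div_add_mod' i n).symm
  have key : (X 0 : MvPolynomial (Fin 2) k) ^ i * X 1 ^ j
      - X 0 ^ (i % n) * X 1 ^ (j + i / n * n)
      = (X 0 ^ (i % n) * X 1 ^ j) * (X 0 ^ (i / n * n) - X 1 ^ (i / n * n)) := by
    have hx : (X 0 : MvPolynomial (Fin 2) k) ^ i = X 0 ^ (i / n * n) * X 0 ^ (i % n) := by
      rw [← pow_add, ← hi]
    rw [hx]
    ring
  rw [key]
  exact Ideal.mul_mem_left _ _ (mem_pow_sub _)

lemma mem_corner : (X 0 : MvPolynomial (Fin 2) k) ^ (q % n) * X 1 ^ (q / n * n) ∈ Ik k n q := by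
  have h1 : (X 0 : MvPolynomial (Fin 2) k) ^ q * X 1 ^ 0
      - X 0 ^ (q % n) * X 1 ^ (0 + q / n * n) ∈ Ik k n q := mem_reduce q 0
  have h2 : (X 0 : MvPolynomial (Fin 2) k) ^ q ∈ Ik k n q :=
    Ideal.subset_span (by simp)
  have h3 : (X 0 : MvPolynomial (Fin 2) k) ^ (q % n) * X 1 ^ (q / n * n)
      = X 0 ^ q * X 1 ^ 0 - (X 0 ^ q * X 1 ^ 0 - X 0 ^ (q % n) * X 1 ^ (0 + q / n * n)) := by
    ring_nf
  rw [h3]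
  exact sub_mem (by simpa using h2) h1

lemma mem_notgood {d j' : ℕ} (h : ¬ good n q (d, j')) :
    (X 0 : MvPolynomial (Fin 2) k) ^ d * X 1 ^ j' ∈ Ik k n q := by
  unfold good at h
  push_neg at h
  rcases Nat.lt_or_ge j' q with hj | hj
  · obtain ⟨hr, ha⟩ := h hj
    obtain ⟨s, rfl⟩ := Nat.exists_eq_add_of_le hr
    obtain ⟨t, rfl⟩ := Nat.exists_eq_add_of_le ha
    have : (X 0 : MvPolynomial (Fin 2) k) ^ (q % n + s) * X 1 ^ (q / n * n + t)
        = (X 0 ^ s * X 1 ^ t) * (X 0 ^ (q % n) * X 1 ^ (q / n * n)) := by ring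
    rw [this]
    exact Ideal.mul_mem_left _ _ mem_corner
  · obtain ⟨t, rfl⟩ := Nat.exists_eq_add_of_le hj
    have : (X 0 : MvPolynomial (Fin 2) k) ^ d * X 1 ^ (q + t)
        = (X 0 ^ d * X 1 ^ t) * X 1 ^ q := by ring
    rw [this]
    exact Ideal.mul_mem_left _ _ (Ideal.subset_span (by simp))

/-- every monomial is congruent mod `Ik` to its normal form -/
lemma mem_reduce_full (i j : ℕ) :
    (X 0 : MvPolynomial (Fin 2) k) ^ i * X 1 ^ j
      - (if good n q (redm n i j) then
          (X 0 : MvPolynomial (Fin 2) k) ^ (redm n i j).1 * X 1 ^ (redm n i j).2 else 0)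
      ∈ Ik k n q := by
  split_ifs with h
  · exact mem_reduce i j
  · rw [sub_zero]
    have h2 : X 0 ^ i * X 1 ^ j - (X 0 : MvPolynomial (Fin 2) k) ^ (redm n i j).1
        * X 1 ^ (redm n i j).2 ∈ Ik k n q := mem_reduce i j
    have h3 := mem_notgood (k := k) (d := (redm n i j).1) (j' := (redm n i j).2) (by simpa using h)
    simpa using add_mem h2 h3

end Ideal

section Kernel

variable {k : Type*} [Field k] {n q : ℕ}

lemma NF_mul_gen (g : MvPolynomial (Fin 2) k)
    (hgen : ∀ i j : ℕ, NF k n q ((X 0 : MvPolynomial (Fin 2) k) ^ i * X 1 ^ j * g) = 0)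
    (h : MvPolynomial (Fin 2) k) : NF k n q (h * g) = 0 := by
  have hz : (NF k n q).comp (LinearMap.mulRight k g) = 0 := by
    apply (basisMonomials (Fin 2) k).ext
    intro m
    simp only [LinearMap.comp_apply, LinearMap.mulRight_apply, LinearMap.zero_apply]
    rw [basis_eq]
    exact hgen _ _
  simpa using LinearMap.congr_fun hz h

lemma NF_mul_g1 (hn : 1 < n) (h : MvPolynomial (Fin 2) k) :
    NF k n q (h * (X 0 : MvPolynomial (Fin 2) k) ^ q) = 0 := by
  apply NF_mul_gen
  intro i j
  have : (X 0 : MvPolynomial (Fin 2) k) ^ i * X 1 ^ j * X 0 ^ q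
      = X 0 ^ (q + i) * X 1 ^ j := by ring
  rw [this, NF_mon, fn_xq k hn]

lemma NF_mul_g2 (h : MvPolynomial (Fin 2) k) :
    NF k n q (h * (X 1 : MvPolynomial (Fin 2) k) ^ q) = 0 := by
  apply NF_mul_gen
  intro i j
  have : (X 0 : MvPolynomial (Fin 2) k) ^ i * X 1 ^ j * X 1 ^ q
      = X 0 ^ i * X 1 ^ (j + q) := by ring
  rw [this, NF_mon, fn_yq]

lemma NF_mul_g3 (hn : 1 < n) (h : MvPolynomial (Fin 2) k) :
    NF k n q (h * ((X 0 : MvPolynomial (Fin 2) k) ^ n - X 1 ^ n)) = 0 := by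
  apply NF_mul_gen
  intro i j
  have : (X 0 : MvPolynomial (Fin 2) k) ^ i * X 1 ^ j * (X 0 ^ n - X 1 ^ n)
      = X 0 ^ (n + i) * X 1 ^ j - X 0 ^ i * X 1 ^ (j + n) := by ring
  rw [this, map_sub, NF_mon, NF_mon, fn_shift k hn, sub_self]

lemma NF_ker (hn : 1 < n) {z : MvPolynomial (Fin 2) k} (hz : z ∈ Ik k n q) :
    NF k n q z = 0 := by
  rw [Ik, show ({(X 0 : MvPolynomial (Fin 2) k) ^ q, X 1 ^ q, X 0 ^ n - X 1 ^ n} : Set _)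
      = insert ((X 0 : MvPolynomial (Fin 2) k) ^ q) {X 1 ^ q, X 0 ^ n - X 1 ^ n} from rfl,
    Ideal.mem_span_insert] at hz
  obtain ⟨a, z1, hz1, rfl⟩ := hz
  rw [show ({(X 1 : MvPolynomial (Fin 2) k) ^ q, X 0 ^ n - X 1 ^ n} : Set _)
      = insert ((X 1 : MvPolynomial (Fin 2) k) ^ q) {X 0 ^ n - X 1 ^ n} from rfl,
    Ideal.mem_span_insert] at hz1
  obtain ⟨b, z2, hz2, rfl⟩ := hz1
  rw [Ideal.mem_span_singleton'] at hz2
  obtain ⟨c, rfl⟩ := hz2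
  rw [map_add, map_add, NF_mul_g1 hn, NF_mul_g2, NF_mul_g3 hn]
  simp

end Kernel

section Main

variable {k : Type*} [Field k] {n q : ℕ}

/-- basis index set -/
def Bs (n q : ℕ) : Finset (ℕ × ℕ) := (Finset.range n ×ˢ Finset.range q).filter (good n q)

lemma fn_good {b : ℕ × ℕ} (hb1 : b.1 < n) (hg : good n q b) :
    fn k n q b.1 b.2 = Finsupp.single b 1 := by
  have hr : redm n b.1 b.2 = b := by
    simp [redm, Nat.mod_eq_of_lt hb1, Nat.div_eq_of_lt hb1]
  unfold fn
  rw [hr, if_pos hg]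

lemma card_Bs (hn : 1 < n) (hnd : ¬ n ∣ q) :
    (Bs n q).card + (n - q % n) * (q % n) = n * q := by
  have hmod : q / n * n + q % n = q := Nat.div_add_mod' q n
  have hr0 : 0 < q % n := Nat.pos_of_ne_zero (fun h => hnd (Nat.dvd_of_mod_eq_zero h))
  have hrn : q % n < n := Nat.mod_lt _ (by omega)
  have hfc := Finset.card_filter_add_card_filter_not
    (s := Finset.range n ×ˢ Finset.range q) (p := good n q)
  have hneg : (Finset.range n ×ˢ Finset.range q).filter (fun b => ¬ good n q b)
      = Finset.Ico (q % n) n ×ˢ Finset.Ico (q / n * n) q := by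
    ext b
    obtain ⟨i, j⟩ := b
    rw [Finset.mem_filter]
    simp only [Finset.mem_filter, Finset.mem_product, Finset.mem_range, Finset.mem_Ico, good]
    constructor
    · rintro ⟨⟨hi, hj⟩, hng⟩
      push_neg at hng
      obtain ⟨h1, h2⟩ := hng hj
      exact ⟨⟨h1, hi⟩, ⟨h2, hj⟩⟩
    · rintro ⟨⟨h1, hi⟩, ⟨h2, hj⟩⟩
      exact ⟨⟨hi, hj⟩, fun hg => hg.2 ⟨h1, h2⟩⟩
  rw [hneg] at hfc
  rw [Finset.card_product, Finset.card_product] at hfc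
  simp only [Nat.card_Ico, Finset.card_range] at hfc
  have hA : q - q / n * n = q % n := by omega
  rw [hA] at hfc
  exact hfc

lemma li_Bs (hn : 1 < n) : LinearIndependent k
    (fun b : Bs n q => Ideal.Quotient.mk (Ik k n q)
      ((X 0 : MvPolynomial (Fin 2) k) ^ (b : ℕ × ℕ).1 * X 1 ^ (b : ℕ × ℕ).2)) := by
  rw [linearIndependent_iff]
  intro l hl
  set w : Bs n q → MvPolynomial (Fin 2) k :=
    fun b => X 0 ^ (b : ℕ × ℕ).1 * X 1 ^ (b : ℕ × ℕ).2 with hw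
  have h2 : Ideal.Quotient.mk (Ik k n q) (Finsupp.linearCombination k w l) = 0 := by
    have happ := Finsupp.apply_linearCombination k
      ((Ideal.Quotient.mkₐ k (Ik k n q)).toLinearMap) w l
    exact happ.trans hl
  have h3 : Finsupp.linearCombination k w l ∈ Ik k n q := by
    rwa [Ideal.Quotient.eq_zero_iff_mem] at h2
  have h4 : NF k n q (Finsupp.linearCombination k w l) = 0 := NF_ker hn h3
  have hv : ∀ b : Bs n q, NF k n q (w b) = Finsupp.single (b : ℕ × ℕ) (1 : k) := by
    intro b
    obtain ⟨hb, hg⟩ := Finset.mem_filter.mp b.2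
    have hb1 : (b : ℕ × ℕ).1 < n := Finset.mem_range.mp (Finset.mem_product.mp hb).1
    rw [hw]
    rw [NF_mon, fn_good hb1 hg]
  have h5 : Finsupp.linearCombination k
      (fun b : Bs n q => Finsupp.single ((b : ℕ × ℕ)) (1 : k)) l = 0 := by
    have happ := Finsupp.apply_linearCombination k (NF k n q) w l
    rw [h4] at happ
    rw [show (fun b : Bs n q => Finsupp.single ((b : ℕ × ℕ)) (1 : k))
      = fun b => NF k n q (w b) from funext fun b => (hv b).symm]
    exact happ.symm
  have h6 : Finsupp.mapDomain (Subtype.val) l = (0 : (ℕ × ℕ) →₀ k) := by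
    rw [Finsupp.linearCombination_apply] at h5
    rw [Finsupp.mapDomain]
    simpa only [Finsupp.smul_single, smul_eq_mul, mul_one] using h5
  have := Finsupp.mapDomain_injective (Subtype.val_injective) (α := Bs n q) (M := k)
  apply this
  rw [h6, Finsupp.mapDomain_zero]

lemma sp_Bs (hn : 1 < n) : ⊤ ≤ Submodule.span k (Set.range
    (fun b : Bs n q => Ideal.Quotient.mk (Ik k n q)
      ((X 0 : MvPolynomial (Fin 2) k) ^ (b : ℕ × ℕ).1 * X 1 ^ (b : ℕ × ℕ).2))) := by
  set v : Bs n q → MvPolynomial (Fin 2) k ⧸ Ik k n q :=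
    fun b => Ideal.Quotient.mk (Ik k n q)
      ((X 0 : MvPolynomial (Fin 2) k) ^ (b : ℕ × ℕ).1 * X 1 ^ (b : ℕ × ℕ).2) with hv
  have hmono : ∀ (m : Fin 2 →₀ ℕ),
      Ideal.Quotient.mk (Ik k n q) (monomial m 1) ∈ Submodule.span k (Set.range v) := by
    intro m
    have hm : (monomial m 1 : MvPolynomial (Fin 2) k) = X 0 ^ (m 0) * X 1 ^ (m 1) := by
      rw [← basis_eq, coe_basisMonomials]
    have heq : Ideal.Quotient.mk (Ik k n q) ((X 0 : MvPolynomial (Fin 2) k) ^ (m 0) * X 1 ^ (m 1))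
        = Ideal.Quotient.mk (Ik k n q) (if good n q (redm n (m 0) (m 1)) then
            (X 0 : MvPolynomial (Fin 2) k) ^ (redm n (m 0) (m 1)).1
              * X 1 ^ (redm n (m 0) (m 1)).2 else 0) := by
      rw [Ideal.Quotient.eq]
      exact mem_reduce_full (m 0) (m 1)
    rw [hm, heq]
    split_ifs with hg
    · apply Submodule.subset_span
      refine ⟨⟨redm n (m 0) (m 1), ?_⟩, rfl⟩
      rw [Bs, Finset.mem_filter, Finset.mem_product, Finset.mem_range, Finset.mem_range]
      exact ⟨⟨Nat.mod_lt _ (by omega), hg.1⟩, hg⟩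
    · simp
  intro z _
  obtain ⟨w, rfl⟩ := Ideal.Quotient.mk_surjective z
  have hwmem : w ∈ Submodule.span k
      (Set.range fun m : Fin 2 →₀ ℕ => (monomial m 1 : MvPolynomial (Fin 2) k)) := by
    have hb := (basisMonomials (Fin 2) k).span_eq
    rw [coe_basisMonomials] at hb
    rw [hb]
    trivial
  have h2 := Submodule.mem_map_of_mem
    (f := (Ideal.Quotient.mkₐ k (Ik k n q)).toLinearMap) hwmem
  rw [Submodule.map_span] at h2
  refine Submodule.span_le.mpr ?_ h2
  rintro _ ⟨_, ⟨m, rfl⟩, rfl⟩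
  exact hmono m

theorem finrank_Ik (k : Type*) [Field k] (n q : ℕ) (hn : 1 < n) (hnd : ¬ n ∣ q) :
    Module.finrank k (MvPolynomial (Fin 2) k ⧸ Ik k n q) + (n - q % n) * (q % n) = n * q := by
  have b : Module.Basis (Bs n q) k (MvPolynomial (Fin 2) k ⧸ Ik k n q) :=
    Module.Basis.mk (li_Bs hn) (sp_Bs hn)
  rw [Module.finrank_eq_card_basis b, Fintype.card_coe, card_Bs hn hnd]

end Main

end HKaux

end HKaux
lemma exists_good_primes (π : ℕ) (hπ : 0 < π) :
    ∃ p N : ℕ, p.Prime ∧ N.Prime ∧ 2 < N ∧ N < p ∧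
      ∃ u : (ZMod N)ˣ, (p : ZMod N) = ↑u ∧ orderOf u = 2 * π ∧ u ^ π = -1 := by
  haveI : NeZero (2 * π) := ⟨by omega⟩
  obtain ⟨N, hNgt, hNp, hNmod⟩ :=
    Nat.forall_exists_prime_gt_and_eq_mod (q := 2 * π) (a := 1) isUnit_one (2 * π)
  have hN2 : 2 < N := by omega
  have hdvd : 2 * π ∣ N - 1 := by
    have h1 : (N : ZMod (2 * π)) = ((1 : ℕ) : ZMod (2 * π)) := by simpa using hNmod
    have h2 := (ZMod.natCast_eq_natCast_iff _ _ _).mp h1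
    exact (Nat.modEq_iff_dvd' (by omega)).mp h2.symm
  haveI : Fact N.Prime := ⟨hNp⟩
  obtain ⟨g, hg⟩ := IsCyclic.exists_generator (α := (ZMod N)ˣ)
  have horder : orderOf g = N - 1 := by
    rw [orderOf_eq_card_of_forall_mem_zpowers hg, Nat.card_eq_fintype_card, ZMod.card_units]
  have hN1 : N - 1 ≠ 0 := by omega
  set s := (N - 1) / (2 * π) with hs_def
  have hs : s ∣ N - 1 := Nat.div_dvd_of_dvd hdvd
  set u := g ^ s with hu_def
  have hord : orderOf u = 2 * π := by
    rw [hu_def, orderOf_pow, horder, Nat.gcd_eq_right hs, hs_def, Nat.div_div_self hdvd hN1]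
  have huπ : u ^ π = -1 := by
    have hord2 : orderOf (u ^ π) = 2 := by
      rw [orderOf_pow, hord, Nat.gcd_eq_right ⟨2, by ring⟩]
      rw [Nat.mul_div_assoc 2 dvd_rfl, Nat.div_self hπ]
    set x := u ^ π with hx_def
    have hx1 : x ≠ 1 := by
      intro h
      rw [h, orderOf_one] at hord2
      omega
    have hxsq : x ^ 2 = 1 := by
      rw [← hord2]
      exact pow_orderOf_eq_one x
    have hv2 : ((x : ZMod N)) ^ 2 = 1 := by
      have := congrArg (Units.val) hxsq
      push_cast at this
      simpa using this
    have hfac : ((x : ZMod N) - 1) * ((x : ZMod N) + 1) = 0 := by ring_nf; linear_combination hv2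
    rcases mul_eq_zero.mp hfac with h | h
    · exfalso
      apply hx1
      apply Units.ext
      have : (x : ZMod N) = 1 := by linear_combination h
      simpa using this
    · apply Units.ext
      have : (x : ZMod N) = -1 := by linear_combination h
      simpa using this
  haveI : NeZero N := ⟨by omega⟩
  obtain ⟨p, hpgt, hpp, hpmod⟩ :=
    Nat.forall_exists_prime_gt_and_eq_mod (q := N) (a := (u : ZMod N)) (Units.isUnit u) N
  exact ⟨p, N, hpp, hNp, hN2, hpgt, u, hpmod, hord, huπ⟩

open MvPolynomial

/-- Main Theorem of the paper: for every positive integer `π` there are primes `p` and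
`n` with `p ∤ n` such that the periodic term `φ` of the Hilbert--Kunz function of
`(ℤ/pℤ)[[x,y]]/(x^n - y^n)` has minimal positive period exactly `π`. -/
theorem stmt8 (π : ℕ) (hπ : 0 < π) :
    ∃ p n : ℕ, p.Prime ∧ n.Prime ∧ 1 < n ∧ ¬ p ∣ n ∧
      ∃ φ : ℕ → ℤ,
        (∀ e : ℕ, φ e = (n : ℤ) * (p : ℤ) ^ e -
          (Module.finrank (ZMod p) (MvPolynomial (Fin 2) (ZMod p) ⧸
            Ideal.span {(X 0 : MvPolynomial (Fin 2) (ZMod p)) ^ p ^ e, X 1 ^ p ^ e,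
              X 0 ^ n - X 1 ^ n}) : ℤ)) ∧
        IsLeast {m : ℕ | 0 < m ∧ ∀ e : ℕ, φ (e + m) = φ e} π := by
  obtain ⟨p, N, hpp, hNp, hN2, hNlt, u, hpu, hord, huπ⟩ := exists_good_primes π hπ
  haveI : Fact N.Prime := ⟨hNp⟩
  haveI : Fact p.Prime := ⟨hpp⟩
  haveI : Fact (1 < N) := ⟨by omega⟩
  have hndvd : ¬ p ∣ N := fun h => by
    have := Nat.le_of_dvd (by omega) h
    omega
  refine ⟨p, N, hpp, hNp, by omega, hndvd, ?_⟩
  set x : ZMod N := (p : ZMod N) with hx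
  set φ : ℕ → ℤ := fun e => ((x ^ e).val : ℤ) * ((N : ℤ) - ((x ^ e).val : ℤ)) with hφ
  have hval : ∀ e, (x ^ e).val = p ^ e % N := by
    intro e
    rw [hx, ← Nat.cast_pow, ZMod.val_natCast]
  have hvlt : ∀ e, (x ^ e).val < N := fun e => ZMod.val_lt _
  have hxu : IsUnit x := by rw [hpu]; exact u.isUnit
  have hvpos : ∀ e, 0 < (x ^ e).val := by
    intro e
    rcases Nat.eq_zero_or_pos ((x ^ e).val) with h | h
    · exfalso
      have hx0 : x ^ e = 0 := by rwa [ZMod.val_eq_zero] at h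
      exact (hxu.pow e).ne_zero hx0
    · exact h
  refine ⟨φ, fun e => ?_, ?_, ?_⟩
  · -- the finrank formula
    have hnd : ¬ N ∣ p ^ e := by
      intro h
      have h2 := hNp.dvd_of_dvd_pow h
      have h3 := (Nat.prime_dvd_prime_iff_eq hNp hpp).mp h2
      omega
    have halg := HKaux.finrank_Ik (ZMod p) N (p ^ e) (by omega) hnd
    unfold HKaux.Ik at halg
    rw [← hval e] at halg
    have hle : (x ^ e).val ≤ N := le_of_lt (hvlt e)
    have hZ := congrArg (fun t : ℕ => (t : ℤ)) halg
    push_cast [Nat.cast_sub hle] at hZ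
    simp only [hφ]
    linear_combination hZ
  · -- π is a period
    refine ⟨hπ, fun e => ?_⟩
    have hxπ : x ^ π = -1 := by
      rw [hpu, ← Units.val_pow_eq_pow_val, huπ]
      simp
    have hneg : x ^ (e + π) = -(x ^ e) := by
      rw [pow_add, hxπ]
      ring
    have h1 := hvpos e
    have h2 := hvlt e
    have hvneg : (x ^ (e + π)).val = N - (x ^ e).val := by
      rw [hneg, ZMod.neg_val']
      rw [Nat.mod_eq_of_lt (by omega)]
    simp only [hφ]
    rw [hvneg]
    push_cast [Nat.cast_sub (le_of_lt h2)]
    ring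
  · -- lower bound
    rintro m ⟨hm0, hme⟩
    have h0 := hme 0
    rw [zero_add] at h0
    have hv0 : (x ^ 0).val = 1 := by rw [pow_zero, ZMod.val_one]
    simp only [hφ] at h0
    rw [hv0] at h0
    set vm := (x ^ m).val with hvm
    have h1 : 0 < vm := hvpos m
    have h2 : vm < N := hvlt m
    have hfac : ((vm : ℤ) - 1) * ((N : ℤ) - 1 - vm) = 0 := by
      push_cast at h0
      linear_combination h0
    have hback : ((vm : ℕ) : ZMod N) = x ^ m := by
      rw [hvm, ZMod.natCast_val, ZMod.cast_id]
    have hcases : u ^ m = 1 ∨ u ^ m = -1 := by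
      rcases mul_eq_zero.mp hfac with h | h
      · left
        have hv1 : vm = 1 := by omega
        apply Units.ext
        push_cast
        rw [← hpu, ← hback, hv1]
        simp
      · right
        have hv1 : vm = N - 1 := by omega
        apply Units.ext
        push_cast
        rw [← hpu, ← hback, hv1]
        push_cast [Nat.cast_sub (by omega : 1 ≤ N)]
        simp
    have hdvd : π ∣ m := by
      rcases hcases with h | h
      · have h2π : 2 * π ∣ m := by
          rw [← hord]
          exact orderOf_dvd_of_pow_eq_one h
        exact dvd_trans ⟨2, by ring⟩ h2π
      · have hsq : u ^ (m * 2) = 1 := by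
          rw [pow_mul, h]
          simp
        have h2π : 2 * π ∣ m * 2 := by
          rw [← hord]
          exact orderOf_dvd_of_pow_eq_one hsq
        obtain ⟨c, hc⟩ := h2π
        have hr : 2 * π * c = 2 * (π * c) := by ring
        exact ⟨c, by omega⟩
    exact Nat.le_of_dvd hm0 hdvd
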